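/- (Theorem 4.14, module exclusion via edge control.) Let F = (f₁, …, f_n) be a Boolean network on variable set V, let I ⊆ V (the variables of the excludable module), let x* ∈ V ∖ I, and let P ⊆ V ∖ I (the phenotype variables). Assume: (i) every directed path in the wiring diagram of F from a vertex of I to a vertex of P passes through x*; and (ii) f_{x*} ≢ 0 has stratified representation f_{x*} = M₁(M₂(⋯) + 1) + q, and some variable y* of f_{x*} belonging to I appears in the most dominant layer M₁ with factor (y* + a). Let F^μ be the controlled network obtained from F by the edge control on y* → x*, i.e., replacing f_{x*} by its restriction with the input y* set to a (all other coordinate functions unchanged); this restriction is the constant q. Then for any two initial states z, z' ∈ 𝔽₂^V that agree on all variables of V ∖ I, the trajectories of F^μ from z and z' agree on every variable of P at all times t ≥ 0. In particular, the phenotype determined by P in F^μ is independent of the module I, so I can be excluded from the control search. -/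

import Mathlib

/-- A Boolean function `f` is essential in (depends on) the variable `v` if flipping
the value of `v` can change the value of `f`. -/
def EssentialIn {V : Type*} [DecidableEq V] (f : (V → ZMod 2) → ZMod 2) (v : V) : Prop :=
  ∃ x, f x ≠ f (Function.update x v (x v + 1))

/-- A Boolean function is canalizing if some variable `v` has an input value `a` that
forces the output value `b`. -/
def IsCanalizing {V : Type*} (f : (V → ZMod 2) → ZMod 2) : Prop :=
  ∃ (v : V) (a b : ZMod 2), ∀ x, x v = a → f x = b

/-- The extended monomial on the variable set `S` with constants `a`,
`M(x) = ∏_{j ∈ S} (x_j + a_j)`. -/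
def extMonomial {V : Type*} (S : Finset V) (a : V → ZMod 2) (x : V → ZMod 2) : ZMod 2 :=
  ∏ j ∈ S, (x j + a j)

/-- The nested form `M₁(M₂(⋯(M_{r-1}(M_r·p + 1) + 1)⋯) + 1)` determined by a list of
layers (variable sets) `L`, constants `a`, and a core polynomial `p`. For `L = []` it
is just `p`. -/
def nestedLayers {V : Type*} (a : V → ZMod 2) (p : (V → ZMod 2) → ZMod 2) :
    List (Finset V) → (V → ZMod 2) → ZMod 2
  | [], x => p x
  | [S], x => extMonomial S a x * p x
  | S :: T :: Ss, x => extMonomial S a x * (nestedLayers a p (T :: Ss) x + 1)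

/-- `IsStratification f L a p q` says that
`f = M₁(M₂(⋯(M_{r-1}(M_r·p_C + 1) + 1)⋯) + 1) + q` is a representation of `f` as in
the He–Macauley stratification theorem: the layers `Mᵢ = ∏_{j ∈ Sᵢ} (x_j + a_j)` are
nonconstant extended monomials in pairwise disjoint variable sets, the core polynomial
`p` is independent of all layer variables and is identically `1` or non-canalizing,
and the exceptional-case conditions hold (if `p ≡ 1` and `r ≠ 1` then `k_r ≥ 2`; if
`p ≡ 1`, `r = 1`, `k₁ = 1` then `q = 0`; and for `r = 0` the representation is
`f = p_C`, i.e. `q = 0`). -/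
def IsStratification {V : Type*} [DecidableEq V] (f : (V → ZMod 2) → ZMod 2)
    (L : List (Finset V)) (a : V → ZMod 2) (p : (V → ZMod 2) → ZMod 2) (q : ZMod 2) :
    Prop :=
  (∀ S ∈ L, S.Nonempty) ∧
  L.Pairwise Disjoint ∧
  (∀ S ∈ L, ∀ v ∈ S, ¬ EssentialIn p v) ∧
  (p = (fun _ => 1) ∨ ¬ IsCanalizing p) ∧
  (p = (fun _ => 1) → L.length ≠ 1 → ∀ S ∈ L.getLast?, 2 ≤ S.card) ∧
  (p = (fun _ => 1) → ∀ S, L = [S] → S.card = 1 → q = 0) ∧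
  (L = [] → q = 0) ∧
  f = fun x => nestedLayers a p L x + q

private lemma agree_aux {V : Type*} [DecidableEq V] [Fintype V]
    (f : (V → ZMod 2) → ZMod 2) :
    ∀ (n : ℕ) (s s' : V → ZMod 2),
      (Finset.univ.filter (fun v => s v ≠ s' v)).card = n →
      (∀ v, EssentialIn f v → s v = s' v) → f s = f s' := by
  intro n
  induction n with
  | zero =>
    intro s s' hcard _
    have hss : s = s' := by
      funext v
      by_contra hv
      have hmem : v ∈ Finset.univ.filter (fun v => s v ≠ s' v) := by simp [hv]
      rw [Finset.card_eq_zero] at hcard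
      simp [hcard] at hmem
    rw [hss]
  | succ n ih =>
    intro s s' hcard hess
    have hne : (Finset.univ.filter (fun v => s v ≠ s' v)).Nonempty := by
      rw [← Finset.card_pos, hcard]; omega
    obtain ⟨v, hv⟩ := hne
    have hvd : s v ≠ s' v := by simpa using hv
    have hnotess : ¬ EssentialIn f v := fun he => hvd (hess v he)
    have hflip : ∀ x, f x = f (Function.update x v (x v + 1)) := by
      intro x; by_contra hc; exact hnotess ⟨x, hc⟩
    have hplus : ∀ x y : ZMod 2, x ≠ y → y = x + 1 := by decide
    have hs' : s' v = s v + 1 := hplus _ _ hvd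
    have h1 : f s = f (Function.update s v (s' v)) := by
      rw [hflip s, hs']
    have hset : (Finset.univ.filter (fun u => Function.update s v (s' v) u ≠ s' u))
        = (Finset.univ.filter (fun u => s u ≠ s' u)).erase v := by
      ext u
      by_cases hu : u = v
      · subst hu; simp
      · simp [Function.update_of_ne hu, hu]
    have hcard2 : (Finset.univ.filter
        (fun u => Function.update s v (s' v) u ≠ s' u)).card = n := by
      rw [hset, Finset.card_erase_of_mem hv, hcard]
      simp
    rw [h1]
    apply ih _ _ hcard2
    intro u hu
    by_cases huv : u = v
    · subst huv; simp
    · rw [Function.update_of_ne huv]; exact hess u hu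

/-- **Theorem 4.14, module exclusion via edge control.** Let `F` be a
Boolean network on the variable set `V`, `I ⊆ V` the variables of the excludable
module, `xstar ∉ I`, and `P ⊆ V ∖ I` the phenotype variables. Assume: (i) every
directed path in the wiring diagram from `I` to `P` passes through `xstar`; (ii) the
update function of `xstar` has a stratified representation with layers `L` and a
variable `ystar ∈ I` appears in the most dominant layer `M₁` (with factor
`(ystar + a)`). Apply the edge control on `ystar → xstar`, replacing the update
function of `xstar` by its restriction with the input `ystar` set to `a`. Then this
restriction is the constant `q`, and any two initial states agreeing outside `I` have
trajectories (under the controlled network) agreeing on every phenotype variable at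
all times; so `I` can be excluded from the control search. -/
theorem stmt_17 (V : Type*) [DecidableEq V] [Fintype V]
    (F : (V → ZMod 2) → (V → ZMod 2))
    (I P : Set V) (xstar ystar : V)
    (hx : xstar ∉ I) (hPI : ∀ v ∈ P, v ∉ I) (hyI : ystar ∈ I)
    -- the wiring diagram: `E u v` iff the update function of `v` depends on `u`
    (E : V → V → Prop)
    (hE : ∀ u v, E u v ↔ ∃ x, F x v ≠ F (Function.update x u (x u + 1)) v)
    -- (i) every path from `I` to `P` passes through `xstar`
    (hpathP : ∀ (l : List V) (hne : l ≠ []), l.Chain' E →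
      l.head hne ∈ I → l.getLast hne ∈ P → xstar ∈ l)
    -- (ii) `ystar` lies in the most dominant layer of the update function of `xstar`
    (L : List (Finset V)) (a : V → ZMod 2)
    (p : (V → ZMod 2) → ZMod 2) (q : ZMod 2)
    (hf0 : (fun x => F x xstar) ≠ fun _ => 0)
    (h : IsStratification (fun x => F x xstar) L a p q)
    (h0 : 0 < L.length) (hyj : ystar ∈ L.get ⟨0, h0⟩)
    -- the controlled network: the edge control on `ystar → xstar` with constant `a`
    (Fμ : (V → ZMod 2) → (V → ZMod 2))
    (hFμ : ∀ z v, Fμ z v =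
      if v = xstar then F (Function.update z ystar (a ystar)) xstar else F z v) :
    -- the restricted update function of `xstar` is the constant `q`
    ((fun z => F (Function.update z ystar (a ystar)) xstar) = fun _ => q) ∧
    -- and the phenotype is independent of the module `I`
    ∀ z z' : V → ZMod 2,
      (∀ v, v ∉ I → z v = z' v) →
      ∀ t : ℕ, ∀ v ∈ P, (Fμ^[t] z) v = (Fμ^[t] z') v := by
  obtain ⟨hneL, hdisj, hpess, hcan, he1, he2, he3, hfeq⟩ := h
  have hbb : ∀ b : ZMod 2, b + b = 0 := by decide
  have key : ∀ z : V → ZMod 2, F (Function.update z ystar (a ystar)) xstar = q := by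
    intro z
    set x := Function.update z ystar (a ystar) with hxdef
    have hx0 : x ystar + a ystar = 0 := by
      rw [hxdef, Function.update_self]; exact hbb _
    have hM : extMonomial (L.get ⟨0, h0⟩) a x = 0 :=
      Finset.prod_eq_zero hyj hx0
    have hnl : nestedLayers a p L x = 0 := by
      obtain ⟨S, L', rfl⟩ : ∃ S L', L = S :: L' := by
        cases L with
        | nil => simp at h0
        | cons S L' => exact ⟨S, L', rfl⟩
      have hS : extMonomial S a x = 0 := hM
      cases L' with
      | nil => simp [nestedLayers, hS]
      | cons T Ss => simp [nestedLayers, hS]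
    have hfx := congrFun hfeq x
    rw [hfx, hnl, zero_add]
  refine ⟨funext key, ?_⟩
  intro z z' hzz'
  set Good : V → Prop := fun v => ∀ (l : List V) (hne : l ≠ []), l.Chain' E →
      l.head hne ∈ I → l.getLast hne = v → xstar ∈ l with hGoodDef
  have hGoodP : ∀ v ∈ P, Good v := by
    intro v hvP l hne hch hh hl
    exact hpathP l hne hch hh (hl ▸ hvP)
  have hGoodI : ∀ v, Good v → v ∉ I := by
    intro v hg hvI
    have hmem := hg [v] (by simp) (List.isChain_singleton v) (by simpa) (by simp)
    simp at hmem
    subst hmem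
    exact hx hvI
  have hGoodE : ∀ u v, Good v → v ≠ xstar → E u v → Good u := by
    intro u v hg hvx hEuv l hne hch hh hl
    have hne2 : l ++ [v] ≠ [] := by simp
    have hch2 : (l ++ [v]).Chain' E := by
      show List.IsChain E (l ++ [v]); rw [List.isChain_append]
      refine ⟨hch, List.isChain_singleton v, ?_⟩
      intro c hc d hd
      simp at hd
      subst hd
      rw [List.getLast?_eq_getLast hne, Option.mem_some_iff] at hc
      subst hc
      rw [hl]; exact hEuv
    have hh2 : (l ++ [v]).head hne2 ∈ I := by
      rwa [List.head_append_of_ne_nil hne]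
    have hl2 : (l ++ [v]).getLast hne2 = v := by
      simp [List.getLast_append]
    have hxin := hg (l ++ [v]) hne2 hch2 hh2 hl2
    rcases List.mem_append.mp hxin with hin | hin
    · exact hin
    · simp at hin; exact absurd hin.symm hvx
  have main : ∀ t, ∀ v, Good v → (Fμ^[t] z) v = (Fμ^[t] z') v := by
    intro t
    induction t with
    | zero => intro v hg; exact hzz' v (hGoodI v hg)
    | succ t ih =>
      intro v hg
      rw [Function.iterate_succ_apply', Function.iterate_succ_apply']
      by_cases hvx : v = xstar
      · subst hvx
        rw [hFμ, hFμ]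
        simp [key]
      · rw [hFμ, hFμ]
        simp only [if_neg hvx]
        apply agree_aux (fun x => F x v) _ _ _ rfl
        intro u hu
        have hEuv : E u v := (hE u v).mpr hu
        exact ih u (hGoodE u v hg hvx hEuv)
  intro t v hvP
  exact main t v (hGoodP v hvP)
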